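/- Under Assumption A1, suppose in addition that Λ = U and T = I (the trace operator is the identity), that A^⊤ = A, that A : U → U* has a bounded inverse, and set M := A and α := 1. Then the only bounded linear operator X : U → U satisfying Assumption A2 (X² = I and range(R) = ker((I − X)T)) together with X^⊤ A X = A is X = 2 R Â^{-1} R^⊤ A − I. With this choice of X, the undamped Robin–Schwarz iteration (β = 1) satisfies u^(1) = R û for any initial λ^(0) ∈ U*, where û is the unique solution of Â û = f̂. -/

import Mathlib

/-- The transpose (dual map) `B^⊤ : Y* → X*` of a bounded linear operator `B : X → Y`. -/
noncomputable def trOp {X Y : Type*} [NormedAddCommGroup X] [NormedSpace ℂ X]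
    [NormedAddCommGroup Y] [NormedSpace ℂ Y] (B : X →L[ℂ] Y) :
    (Y →L[ℂ] ℂ) →L[ℂ] (X →L[ℂ] ℂ) :=
  (ContinuousLinearMap.compL ℂ X Y ℂ).flip B

/-- The exceptional exchange operator `X = 2 R Â⁻¹ R^⊤ A − I` (here `Λ = U`, `T = I`). -/
noncomputable def exX {Uhat U : Type*}
    [NormedAddCommGroup Uhat] [NormedSpace ℂ Uhat]
    [NormedAddCommGroup U] [NormedSpace ℂ U]
    (R : Uhat →L[ℂ] U) (A : U →L[ℂ] (U →L[ℂ] ℂ))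
    (Ahatinv : (Uhat →L[ℂ] ℂ) →L[ℂ] Uhat) : U →L[ℂ] U :=
  (2 : ℂ) • (R.comp (Ahatinv.comp ((trOp R).comp A))) - ContinuousLinearMap.id ℂ U

/-- The scattering operator for `T = I`, `M = A`, `α = 1`:
`S = −I + 2 M (A + M)⁻¹ = −I + 2 A (2A)⁻¹`, with `(A + M)⁻¹ = ½ A⁻¹`. -/
noncomputable def exS {U : Type*} [NormedAddCommGroup U] [NormedSpace ℂ U]
    (A : U →L[ℂ] (U →L[ℂ] ℂ)) (Ainv : (U →L[ℂ] ℂ) →L[ℂ] U) :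
    (U →L[ℂ] ℂ) →L[ℂ] (U →L[ℂ] ℂ) :=
  -(ContinuousLinearMap.id ℂ (U →L[ℂ] ℂ)) + (2 : ℂ) • (A.comp ((2 : ℂ)⁻¹ • Ainv))

/-- The data `d = 2 X^⊤ M (A + M)⁻¹ f` for `T = I`, `M = A`, `α = 1`. -/
noncomputable def exd {Uhat U : Type*}
    [NormedAddCommGroup Uhat] [NormedSpace ℂ Uhat]
    [NormedAddCommGroup U] [NormedSpace ℂ U]
    (R : Uhat →L[ℂ] U) (A : U →L[ℂ] (U →L[ℂ] ℂ))
    (Ainv : (U →L[ℂ] ℂ) →L[ℂ] U) (Ahatinv : (Uhat →L[ℂ] ℂ) →L[ℂ] Uhat)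
    (f : U →L[ℂ] ℂ) : U →L[ℂ] ℂ :=
  (2 : ℂ) • trOp (exX R A Ahatinv) (A (((2 : ℂ)⁻¹ • Ainv) f))


lemma trOp_apply' {X Y : Type*} [NormedAddCommGroup X] [NormedSpace ℂ X]
    [NormedAddCommGroup Y] [NormedSpace ℂ Y] (B : X →L[ℂ] Y)
    (μ : Y →L[ℂ] ℂ) (x : X) : trOp B μ x = μ (B x) := rfl

/-- an exceptional interface exchange operator: with `Λ = U`, `T = I`,
`A` symmetric and invertible, `M = A`, `α = 1`, the only exchange operator satisfying A2
and `X^⊤ A X = A` is `X = 2 R Â⁻¹ R^⊤ A − I`, and the undamped Robin–Schwarz iteration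
then yields `u⁽¹⁾ = R û` for every initial `λ⁽⁰⁾`. -/
theorem statement19
    {Uhat U : Type*}
    [NormedAddCommGroup Uhat] [InnerProductSpace ℂ Uhat] [CompleteSpace Uhat]
    [NormedAddCommGroup U] [InnerProductSpace ℂ U] [CompleteSpace U]
    (R : Uhat →L[ℂ] U)
    -- Assumption A1
    (hRinj : LinearMap.ker (R : Uhat →ₗ[ℂ] U) = ⊥)
    (hRclosed : IsClosed (Set.range R))
    (A : U →L[ℂ] (U →L[ℂ] ℂ))
    -- `A^⊤ = A`
    (hAsym : ∀ u v : U, A u v = A v u)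
    -- `A` has a bounded inverse
    (Ainv : (U →L[ℂ] ℂ) →L[ℂ] U)
    (hAl : ∀ u : U, Ainv (A u) = u) (hAr : ∀ μ : U →L[ℂ] ℂ, A (Ainv μ) = μ)
    -- `Â = R^⊤ A R` bijective with bounded inverse
    (Ahatinv : (Uhat →L[ℂ] ℂ) →L[ℂ] Uhat)
    (hAhat_left : ∀ uhat : Uhat, Ahatinv (trOp R (A (R uhat))) = uhat)
    (hAhat_right : ∀ g : Uhat →L[ℂ] ℂ, trOp R (A (R (Ahatinv g))) = g)
    (f : U →L[ℂ] ℂ) :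
    -- uniqueness of the exchange operator
    (∀ X : U →L[ℂ] U,
      X.comp X = ContinuousLinearMap.id ℂ U →
      LinearMap.range (R : Uhat →ₗ[ℂ] U) = LinearMap.ker (((ContinuousLinearMap.id ℂ U - X : U →L[ℂ] U)) : U →ₗ[ℂ] U) →
      (trOp X).comp (A.comp X) = A →
      X = exX R A Ahatinv) ∧
    -- the undamped iteration converges after the first step
    (∀ uhat : Uhat, trOp R (A (R uhat)) = trOp R f →
      ∀ lam0 : U →L[ℂ] ℂ,
        ((2 : ℂ)⁻¹ • Ainv)
          (f + (lam0 + (exd R A Ainv Ahatinv f -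
            (lam0 - trOp (exX R A Ahatinv) (exS A Ainv lam0))))) = R uhat) := by
  constructor
  · intro X hX2 hrange hXAX
    ext u
    have hXX : X (X u) = u := by
      have := congrArg (fun T : U →L[ℂ] U => T u) hX2
      simpa using this
    have hmem : u + X u ∈ LinearMap.ker ((ContinuousLinearMap.id ℂ U - X : U →L[ℂ] U) : U →ₗ[ℂ] U) := by
      simp only [LinearMap.mem_ker, ContinuousLinearMap.coe_sub',
        ContinuousLinearMap.coe_coe, Pi.sub_apply, ContinuousLinearMap.id_apply,
        map_add, hXX]
      abel
    rw [← hrange] at hmem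
    obtain ⟨w, hw⟩ := hmem
    have key : ∀ vhat : Uhat, A (X u) (R vhat) = A u (R vhat) := by
      intro vhat
      have hfix : X (R vhat) = R vhat := by
        have hm : R vhat ∈ LinearMap.ker ((ContinuousLinearMap.id ℂ U - X : U →L[ℂ] U) : U →ₗ[ℂ] U) := by
          rw [← hrange]; exact ⟨vhat, rfl⟩
        have := LinearMap.mem_ker.mp hm
        simp only [ContinuousLinearMap.coe_sub', ContinuousLinearMap.coe_coe,
          Pi.sub_apply, ContinuousLinearMap.id_apply] at this
        linear_combination (norm := module) -this
      have := congrArg (fun T : U →L[ℂ] (U →L[ℂ] ℂ) => T u (R vhat)) hXAX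
      simp only [ContinuousLinearMap.comp_apply, trOp_apply'] at this
      rw [hfix] at this
      exact this
    have hAw : trOp R (A (R w)) = (2 : ℂ) • trOp R (A u) := by
      ext vhat
      simp only [trOp_apply', ContinuousLinearMap.smul_apply, (@id (R w = u + X u) hw), map_add,
        ContinuousLinearMap.add_apply, key, smul_eq_mul]
      ring
    have hww : w = (2 : ℂ) • Ahatinv (trOp R (A u)) := by
      rw [← hAhat_left w, hAw, map_smul]
    have hXu : X u = (2 : ℂ) • R (Ahatinv (trOp R (A u))) - u := by
      have : R w = u + X u := hw
      rw [hww, map_smul] at this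
      rw [eq_sub_iff_add_eq, add_comm]
      exact this.symm
    rw [hXu]
    simp only [exX, ContinuousLinearMap.sub_apply, ContinuousLinearMap.smul_apply,
      ContinuousLinearMap.comp_apply, ContinuousLinearMap.id_apply]
  · intro uhat huhat lam0
    have hS : exS A Ainv lam0 = 0 := by
      ext v
      simp only [exS, ContinuousLinearMap.add_apply, ContinuousLinearMap.neg_apply,
        ContinuousLinearMap.id_apply, ContinuousLinearMap.smul_apply,
        ContinuousLinearMap.comp_apply, map_smul, hAr, ContinuousLinearMap.zero_apply,
        smul_eq_mul]
      ring
    have hbig : f + (lam0 + (exd R A Ainv Ahatinv f -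
        (lam0 - trOp (exX R A Ahatinv) (exS A Ainv lam0)))) = (2 : ℂ) • A (R uhat) := by
      rw [hS]
      ext u
      have h1 : exd R A Ainv Ahatinv f u = (2 : ℂ) • f (R (Ahatinv (trOp R (A u)))) - f u := by
        simp only [exd, ContinuousLinearMap.smul_apply, trOp_apply', exX,
          ContinuousLinearMap.sub_apply, ContinuousLinearMap.comp_apply,
          ContinuousLinearMap.id_apply, map_smul, hAr]
        simp only [map_sub, map_smul, smul_eq_mul]
        ring
      have h2 : f (R (Ahatinv (trOp R (A u)))) = A (R uhat) u := by
        have : f (R (Ahatinv (trOp R (A u)))) = trOp R f (Ahatinv (trOp R (A u))) := rfl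
        rw [this, ← huhat, trOp_apply', hAsym (R uhat) (R (Ahatinv (trOp R (A u))))]
        have h3 : A (R (Ahatinv (trOp R (A u)))) (R uhat)
            = trOp R (A (R (Ahatinv (trOp R (A u))))) uhat := rfl
        rw [h3, hAhat_right, trOp_apply', hAsym u (R uhat)]
      simp only [map_zero, ContinuousLinearMap.zero_apply, ContinuousLinearMap.add_apply, ContinuousLinearMap.sub_apply,
        ContinuousLinearMap.smul_apply, h1, h2, smul_eq_mul]
      ring
    rw [hbig]
    simp only [ContinuousLinearMap.smul_apply, map_smul, hAl, smul_smul]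
    norm_num
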